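/- arXiv:1705.09081 — 10 statements merged into one kernel-verified Lean document; each statement's English description precedes it below -/
import Mathlib

section
/- Let t0 < tf be real numbers and n a natural number. Let E : ℝ → Matrix (Fin n) (Fin n) ℝ be continuously differentiable on [t0, tf] and A : ℝ → Matrix (Fin n) (Fin n) ℝ be continuous on [t0, tf], and suppose that for all t ∈ [t0, tf], E(t)ᵀ = E(t) and E'(t) = −(A(t) + A(t)ᵀ). Then for all continuously differentiable functions x₁, x₂ : ℝ → (Fin n → ℝ) with x₁(t0) = x₁(tf) = 0 and x₂(t0) = x₂(tf) = 0, one has ∫_{t0}^{tf} ⟪x₁(t), E(t) ⬝ x₂'(t) − A(t) ⬝ x₂(t)⟫ dt = ∫_{t0}^{tf} ⟪−E(t) ⬝ x₁'(t) + A(t) ⬝ x₁(t), x₂(t)⟫ dt, i.e. the differential-algebraic operator L = E d/dt − A is formally skew-adjoint with respect to the L² inner product. -/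
open Matrix Set

/-- `M'` is the entrywise derivative of the matrix-valued function `M` at `t`. -/
def MatHasDerivAt {α β : Type*} (M M' : ℝ → Matrix α β ℝ) (t : ℝ) : Prop :=
  ∀ i j, HasDerivAt (fun s => M s i j) (M' t i j) t

private lemma aux_dot {n : ℕ} {s : Set ℝ} {v w : ℝ → Fin n → ℝ}
    {M : ℝ → Matrix (Fin n) (Fin n) ℝ}
    (hv : Continuous v) (hw : Continuous w) (hM : ContinuousOn M s) :
    ContinuousOn (fun t => v t ⬝ᵥ (M t *ᵥ w t)) s := by
  simp only [dotProduct, mulVec]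
  apply continuousOn_finset_sum
  intro i _
  apply ContinuousOn.mul ((continuous_apply i).comp hv).continuousOn
  apply continuousOn_finset_sum
  intro j _
  exact (((continuous_apply j).comp (continuous_apply i)).comp_continuousOn hM).mul
    ((continuous_apply j).comp hw).continuousOn

/-- A skew-adjoint differential-algebraic operator `L = E d/dt − A` is formally
skew-adjoint with respect to the `L²` inner product on `[t0, tf]`. -/
theorem skewAdjoint_operator_formally_skewAdjoint
    (n : ℕ) (t0 tf : ℝ) (h : t0 < tf)
    (E E' A : ℝ → Matrix (Fin n) (Fin n) ℝ)
    (hE : ∀ t ∈ Set.Icc t0 tf, MatHasDerivAt E E' t)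
    (hE'c : ContinuousOn E' (Set.Icc t0 tf))
    (hAc : ContinuousOn A (Set.Icc t0 tf))
    (hEsym : ∀ t ∈ Set.Icc t0 tf, (E t)ᵀ = E t)
    (hskew : ∀ t ∈ Set.Icc t0 tf, E' t = -(A t + (A t)ᵀ)) :
    ∀ x₁ x₂ x₁' x₂' : ℝ → Fin n → ℝ,
      (∀ t, HasDerivAt x₁ (x₁' t) t) → Continuous x₁' →
      (∀ t, HasDerivAt x₂ (x₂' t) t) → Continuous x₂' →
      x₁ t0 = 0 → x₁ tf = 0 → x₂ t0 = 0 → x₂ tf = 0 →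
      ∫ t in t0..tf, x₁ t ⬝ᵥ (E t *ᵥ x₂' t - A t *ᵥ x₂ t) =
        ∫ t in t0..tf, (-(E t *ᵥ x₁' t) + A t *ᵥ x₁ t) ⬝ᵥ x₂ t := by
  intro x₁ x₂ x₁' x₂' hx₁ hx₁'c hx₂ hx₂'c h10 h1f h20 h2f
  have hx₁c : Continuous x₁ := continuous_iff_continuousAt.2 fun t => (hx₁ t).continuousAt
  have hx₂c : Continuous x₂ := continuous_iff_continuousAt.2 fun t => (hx₂ t).continuousAt
  have hEc : ContinuousOn E (Set.Icc t0 tf) := fun t ht =>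
    continuousWithinAt_pi.2 fun i => continuousWithinAt_pi.2 fun j =>
      ((hE t ht) i j).continuousAt.continuousWithinAt
  set g : ℝ → ℝ := fun s => x₁ s ⬝ᵥ (E s *ᵥ x₂ s) with hgdef
  set D : ℝ → ℝ := fun t =>
    x₁' t ⬝ᵥ (E t *ᵥ x₂ t) + x₁ t ⬝ᵥ (E' t *ᵥ x₂ t) + x₁ t ⬝ᵥ (E t *ᵥ x₂' t) with hDdef
  have key : ∀ t ∈ Set.Icc t0 tf,
      HasDerivAt (fun s => ∑ i, ∑ j, x₁ s i * (E s i j * x₂ s j))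
        (∑ i, ∑ j, (x₁' t i * (E t i j * x₂ t j) +
          x₁ t i * (E' t i j * x₂ t j + E t i j * x₂' t j))) t := by
    intro t ht
    apply HasDerivAt.fun_sum; intro i _
    apply HasDerivAt.fun_sum; intro j _
    exact ((hasDerivAt_pi.1 (hx₁ t)) i).mul
      (((hE t ht) i j).mul ((hasDerivAt_pi.1 (hx₂ t)) j))
  have hderiv : ∀ t ∈ Set.Icc t0 tf, HasDerivAt g (D t) t := by
    intro t ht
    have hg : g = fun s => ∑ i, ∑ j, x₁ s i * (E s i j * x₂ s j) := by
      funext s; simp [hgdef, dotProduct, mulVec, Finset.mul_sum]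
    rw [hg]
    convert key t ht using 1
    simp [hDdef, dotProduct, mulVec, Finset.mul_sum, Finset.sum_add_distrib, mul_add]
    ring
  have hDc : ContinuousOn D (Set.Icc t0 tf) :=
    ((aux_dot hx₁'c hx₂c hEc).add (aux_dot hx₁c hx₂c hE'c)).add (aux_dot hx₁c hx₂'c hEc)
  have hDint : IntervalIntegrable D MeasureTheory.volume t0 tf := by
    apply ContinuousOn.intervalIntegrable
    rwa [Set.uIcc_of_le h.le]
  have hzero : (∫ t in t0..tf, D t) = 0 := by
    rw [intervalIntegral.integral_eq_sub_of_hasDerivAt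
      (fun t ht => hderiv t (by rwa [Set.uIcc_of_le h.le] at ht)) hDint]
    simp [hgdef, h10, h1f]
  have hint1 : IntervalIntegrable (fun t => x₁ t ⬝ᵥ (E t *ᵥ x₂' t - A t *ᵥ x₂ t))
      MeasureTheory.volume t0 tf := by
    apply ContinuousOn.intervalIntegrable
    rw [Set.uIcc_of_le h.le]
    exact ((aux_dot hx₁c hx₂'c hEc).sub (aux_dot hx₁c hx₂c hAc)).congr
      (fun t ht => by rw [dotProduct_sub]; rfl)
  have hint2 : IntervalIntegrable (fun t => (-(E t *ᵥ x₁' t) + A t *ᵥ x₁ t) ⬝ᵥ x₂ t)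
      MeasureTheory.volume t0 tf := by
    apply ContinuousOn.intervalIntegrable
    rw [Set.uIcc_of_le h.le]
    refine ((aux_dot hx₂c hx₁'c hEc).neg.add (aux_dot hx₂c hx₁c hAc)).congr
      (fun t ht => ?_)
    rw [add_dotProduct, neg_dotProduct, dotProduct_comm,
      dotProduct_comm (A t *ᵥ x₁ t)]
    rfl
  have keyeq : (∫ t in t0..tf, x₁ t ⬝ᵥ (E t *ᵥ x₂' t - A t *ᵥ x₂ t)) -
      (∫ t in t0..tf, (-(E t *ᵥ x₁' t) + A t *ᵥ x₁ t) ⬝ᵥ x₂ t) = 0 := by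
    rw [← intervalIntegral.integral_sub hint1 hint2, ← hzero]
    apply intervalIntegral.integral_congr
    intro t ht
    rw [Set.uIcc_of_le h.le] at ht
    have hs := hEsym t ht
    have hk := hskew t ht
    have e1 : (E t *ᵥ x₁' t) ⬝ᵥ x₂ t = x₁' t ⬝ᵥ (E t *ᵥ x₂ t) := by
      rw [dotProduct_comm, Matrix.dotProduct_mulVec, ← Matrix.mulVec_transpose, hs,
        dotProduct_comm]
    have e2 : (A t *ᵥ x₁ t) ⬝ᵥ x₂ t = x₁ t ⬝ᵥ ((A t)ᵀ *ᵥ x₂ t) := by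
      rw [dotProduct_comm, Matrix.dotProduct_mulVec, ← Matrix.mulVec_transpose,
        dotProduct_comm]
    simp only [hk, Matrix.neg_mulVec, Matrix.add_mulVec, dotProduct_sub, dotProduct_neg,
      dotProduct_add, add_dotProduct, neg_dotProduct, e1, e2, hDdef]
    ring
  linarith
end

section
/- Let E : ℝ → Matrix (Fin n) (Fin n) ℝ be continuously differentiable and A : ℝ → Matrix (Fin n) (Fin n) ℝ be continuous on an interval I, and suppose that for all t ∈ I, E(t)ᵀ = E(t) and E'(t) = −(A(t) + A(t)ᵀ). Let V : ℝ → Matrix (Fin n) (Fin r) ℝ be continuously differentiable on I. Define Ẽ(t) = V(t)ᵀ * E(t) * V(t) and Ã(t) = V(t)ᵀ * A(t) * V(t) − V(t)ᵀ * E(t) * V'(t). Then for all t ∈ I, Ẽ(t)ᵀ = Ẽ(t) and Ẽ'(t) = −(Ã(t) + Ã(t)ᵀ); that is, the congruence-transformed differential-algebraic operator L_V = Ẽ d/dt − Ã is again skew-adjoint. -/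
open Matrix Set

/-- Skew-adjoint differential-algebraic operators remain skew-adjoint under
time-varying congruence transformations `Ẽ = VᵀEV`, `Ã = VᵀAV − VᵀEV'`. -/
theorem congruence_preserves_skewAdjoint
    (n r : ℕ) (I : Set ℝ)
    (E E' A : ℝ → Matrix (Fin n) (Fin n) ℝ)
    (V V' : ℝ → Matrix (Fin n) (Fin r) ℝ)
    (hE : ∀ t ∈ I, MatHasDerivAt E E' t)
    (hE'c : ContinuousOn E' I)
    (hAc : ContinuousOn A I)
    (hV : ∀ t ∈ I, MatHasDerivAt V V' t)
    (hV'c : ContinuousOn V' I)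
    (hEsym : ∀ t ∈ I, (E t)ᵀ = E t)
    (hskew : ∀ t ∈ I, E' t = -(A t + (A t)ᵀ)) :
    ∀ t ∈ I,
      ((V t)ᵀ * E t * V t)ᵀ = (V t)ᵀ * E t * V t ∧
      MatHasDerivAt (fun s => (V s)ᵀ * E s * V s)
        (fun s => -(((V s)ᵀ * A s * V s - (V s)ᵀ * E s * V' s) +
          ((V s)ᵀ * A s * V s - (V s)ᵀ * E s * V' s)ᵀ)) t := by
  intro t ht
  have hEt := hEsym t ht
  constructor
  · rw [Matrix.transpose_mul, Matrix.transpose_mul, Matrix.transpose_transpose, hEt,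
      Matrix.mul_assoc]
  · -- the claimed derivative matrix equals the product-rule derivative
    have hM : -(((V t)ᵀ * A t * V t - (V t)ᵀ * E t * V' t) +
          ((V t)ᵀ * A t * V t - (V t)ᵀ * E t * V' t)ᵀ)
        = (V' t)ᵀ * E t * V t + (V t)ᵀ * E' t * V t + (V t)ᵀ * E t * V' t := by
      rw [hskew t ht]
      simp only [Matrix.transpose_sub, Matrix.transpose_mul, Matrix.transpose_transpose, hEt,
        Matrix.mul_neg, Matrix.neg_mul, Matrix.mul_add, Matrix.add_mul, Matrix.mul_assoc]
      abel
    intro i j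
    have key : HasDerivAt (fun s => ∑ l, ∑ k, V s k i * E s k l * V s l j)
        (∑ l, ∑ k, (V' t k i * E t k l * V t l j + V t k i * E' t k l * V t l j
          + V t k i * E t k l * V' t l j)) t := by
      apply HasDerivAt.fun_sum
      intro l _
      apply HasDerivAt.fun_sum
      intro k _
      have h2 := ((hV t ht k i).fun_mul (hE t ht k l)).fun_mul (hV t ht l j)
      convert h2 using 1
      · rfl
      ring
    have hfun : (fun s => ((V s)ᵀ * E s * V s) i j)
        = fun s => ∑ l, ∑ k, V s k i * E s k l * V s l j := by
      funext s
      simp [Matrix.mul_apply, Matrix.transpose_apply, Finset.sum_mul]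
    rw [hfun]
    convert key using 1
    beta_reduce
    rw [hM]
    simp [Matrix.mul_apply, Matrix.add_apply, Matrix.transpose_apply, Finset.sum_mul,
      Finset.mul_sum, Finset.sum_add_distrib]
end

section
/- Let I = [t0, tf] and let E, Q : ℝ → Matrix (Fin n) (Fin n) ℝ be continuously differentiable on I and J, R, K : ℝ → Matrix (Fin n) (Fin n) ℝ, B, P : ℝ → Matrix (Fin n) (Fin m) ℝ, S, N : ℝ → Matrix (Fin m) (Fin m) ℝ be continuous on I with S(t)ᵀ = S(t) and N(t)ᵀ = −N(t) for all t ∈ I. Assume the skew-adjointness conditions: for all t ∈ I, Q(t)ᵀ * E(t) = E(t)ᵀ * Q(t) and (d/dt)(Q(t)ᵀ * E(t)) = Q(t)ᵀ * (E(t) * K(t) − J(t) * Q(t)) + (E(t) * K(t) − J(t) * Q(t))ᵀ * Q(t). Let u : ℝ → ℝᵐ be continuous, let x : ℝ → ℝⁿ be continuously differentiable with E(t) ⬝ x'(t) = ((J(t) − R(t)) * Q(t) − E(t) * K(t)) ⬝ x(t) + (B(t) − P(t)) ⬝ u(t) for all t ∈ I, and let y(t) = (B(t) + P(t))ᵀ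 * Q(t) ⬝ x(t) + (S(t) + N(t)) ⬝ u(t). Then for all t ∈ I, (d/dt)[(1/2)⟪x(t), (Q(t)ᵀ * E(t)) ⬝ x(t)⟫] = ⟪u(t), y(t)⟫ − (⟪x(t), (Q(t)ᵀ*R(t)*Q(t)) ⬝ x(t)⟫ + 2⟪x(t), (Q(t)ᵀ*P(t)) ⬝ u(t)⟫ + ⟪u(t), S(t) ⬝ u(t)⟫). -/
open Matrix Set

lemma dot_transpose {k l : ℕ} (A : Matrix (Fin l) (Fin k) ℝ) (v : Fin k → ℝ) (w : Fin l → ℝ) :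
    v ⬝ᵥ Aᵀ *ᵥ w = (A *ᵥ v) ⬝ᵥ w := by
  rw [Matrix.dotProduct_mulVec, Matrix.vecMul_transpose]

lemma hasDerivAt_quad {n : ℕ} (M M' : ℝ → Matrix (Fin n) (Fin n) ℝ)
    (x : ℝ → Fin n → ℝ) (x' : Fin n → ℝ) (t : ℝ)
    (hM : MatHasDerivAt M M' t) (hx : HasDerivAt x x' t) :
    HasDerivAt (fun s => x s ⬝ᵥ M s *ᵥ x s)
      (x' ⬝ᵥ M t *ᵥ x t + x t ⬝ᵥ M' t *ᵥ x t + x t ⬝ᵥ M t *ᵥ x') t := by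
  have hxi : ∀ i, HasDerivAt (fun s => x s i) (x' i) t := fun i => (hasDerivAt_pi.mp hx) i
  have key : ∀ (v w : Fin n → ℝ) (A : Matrix (Fin n) (Fin n) ℝ),
      v ⬝ᵥ A *ᵥ w = ∑ i, ∑ j, v i * A i j * w j := by
    intro v w A
    simp [dotProduct, mulVec, Finset.mul_sum, mul_assoc]
  have H : HasDerivAt (fun s => ∑ i, ∑ j, x s i * M s i j * x s j)
      (∑ i, ∑ j, ((x' i * M t i j + x t i * M' t i j) * x t j
        + x t i * M t i j * x' j)) t := by
    apply HasDerivAt.fun_sum; intro i _; apply HasDerivAt.fun_sum; intro j _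
    exact ((hxi i).mul (hM i j)).mul (hxi j)
  have heq : (fun s => x s ⬝ᵥ M s *ᵥ x s) = fun s => ∑ i, ∑ j, x s i * M s i j * x s j := by
    funext s; rw [key]
  rw [heq]
  convert H using 1
  rw [key, key, key, ← Finset.sum_add_distrib, ← Finset.sum_add_distrib]
  refine Finset.sum_congr rfl fun i _ => ?_
  rw [← Finset.sum_add_distrib, ← Finset.sum_add_distrib]
  exact Finset.sum_congr rfl fun j _ => by ring

/-- Power balance for a linear time-varying port-Hamiltonian descriptor system:
along any classical solution, `d/dt ℋ(x) = uᵀy − [x;u]ᵀ W [x;u]`. -/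
theorem pHDAE_power_balance
    (n m : ℕ) (t0 tf : ℝ) (htf : t0 ≤ tf)
    (E Q J R K : ℝ → Matrix (Fin n) (Fin n) ℝ)
    (B P : ℝ → Matrix (Fin n) (Fin m) ℝ)
    (S N : ℝ → Matrix (Fin m) (Fin m) ℝ)
    (hEc : ContinuousOn E (Set.Icc t0 tf)) (hQc : ContinuousOn Q (Set.Icc t0 tf))
    (hJc : ContinuousOn J (Set.Icc t0 tf)) (hRc : ContinuousOn R (Set.Icc t0 tf))
    (hKc : ContinuousOn K (Set.Icc t0 tf)) (hBc : ContinuousOn B (Set.Icc t0 tf))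
    (hPc : ContinuousOn P (Set.Icc t0 tf)) (hSc : ContinuousOn S (Set.Icc t0 tf))
    (hNc : ContinuousOn N (Set.Icc t0 tf))
    (hSsym : ∀ t ∈ Set.Icc t0 tf, (S t)ᵀ = S t)
    (hNskew : ∀ t ∈ Set.Icc t0 tf, (N t)ᵀ = -N t)
    (hsym : ∀ t ∈ Set.Icc t0 tf, (Q t)ᵀ * E t = (E t)ᵀ * Q t)
    (hQE : ∀ t ∈ Set.Icc t0 tf,
      MatHasDerivAt (fun s => (Q s)ᵀ * E s)
        (fun s => (Q s)ᵀ * (E s * K s - J s * Q s) +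
          (E s * K s - J s * Q s)ᵀ * Q s) t)
    (u : ℝ → Fin m → ℝ) (huc : ContinuousOn u (Set.Icc t0 tf))
    (x x' : ℝ → Fin n → ℝ)
    (hx : ∀ t ∈ Set.Icc t0 tf, HasDerivAt x (x' t) t)
    (hx'c : ContinuousOn x' (Set.Icc t0 tf))
    (hode : ∀ t ∈ Set.Icc t0 tf, E t *ᵥ x' t =
      ((J t - R t) * Q t - E t * K t) *ᵥ x t + (B t - P t) *ᵥ u t)
    (y : ℝ → Fin m → ℝ)
    (hy : ∀ t ∈ Set.Icc t0 tf,
      y t = ((B t + P t)ᵀ * Q t) *ᵥ x t + (S t + N t) *ᵥ u t) :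
    ∀ t ∈ Set.Icc t0 tf,
      HasDerivAt (fun s => (1 / 2 : ℝ) * (x s ⬝ᵥ ((Q s)ᵀ * E s) *ᵥ x s))
        (u t ⬝ᵥ y t -
          (x t ⬝ᵥ ((Q t)ᵀ * R t * Q t) *ᵥ x t +
            2 * (x t ⬝ᵥ ((Q t)ᵀ * P t) *ᵥ u t) +
            u t ⬝ᵥ S t *ᵥ u t)) t := by
  intro t ht
  have hd := hasDerivAt_quad (fun s => (Q s)ᵀ * E s)
      (fun s => (Q s)ᵀ * (E s * K s - J s * Q s) + (E s * K s - J s * Q s)ᵀ * Q s)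
      x (x' t) t (hQE t ht) (hx t ht)
  have hd2 := hd.const_mul (1 / 2 : ℝ)
  convert hd2 using 1
  case e'_4 => rfl
  case e'_5 => rfl
  -- symmetry of QᵀE
  have hsymm : ((Q t)ᵀ * E t)ᵀ = (Q t)ᵀ * E t := by
    rw [Matrix.transpose_mul, Matrix.transpose_transpose, ← hsym t ht]
  have h1 : x' t ⬝ᵥ ((Q t)ᵀ * E t) *ᵥ x t = x t ⬝ᵥ ((Q t)ᵀ * E t) *ᵥ x' t := by
    rw [dotProduct_comm, ← dot_transpose, hsymm]
  have hN0 : u t ⬝ᵥ N t *ᵥ u t = 0 := by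
    have h := dot_transpose (N t) (u t) (u t)
    rw [hNskew t ht, Matrix.neg_mulVec, dotProduct_neg] at h
    linarith [dotProduct_comm (u t) (N t *ᵥ u t), h]
  rw [hy t ht, h1]
  simp only [← Matrix.mulVec_mulVec, Matrix.add_mulVec, Matrix.sub_mulVec,
    Matrix.mulVec_add, Matrix.mulVec_sub, dotProduct_add, dotProduct_sub,
    add_dotProduct, sub_dotProduct, Matrix.transpose_sub, Matrix.transpose_mul,
    Matrix.transpose_transpose, dot_transpose]
  rw [hode t ht]
  simp only [Matrix.add_mulVec, Matrix.sub_mulVec, Matrix.mulVec_add, Matrix.mulVec_sub,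
    dotProduct_add, dotProduct_sub, add_dotProduct, sub_dotProduct,
    ← Matrix.mulVec_mulVec, dot_transpose]
  simp only [dotProduct_comm]
  linarith [hN0]
end

section
/- Let Q, R : ℝ → Matrix (Fin n) (Fin n) ℝ, P : ℝ → Matrix (Fin n) (Fin m) ℝ, S : ℝ → Matrix (Fin m) (Fin m) ℝ be functions on an interval I, and suppose that for each t ∈ I the block matrix W(t) = [[Q(t)ᵀ*R(t)*Q(t), Q(t)ᵀ*P(t)], [P(t)ᵀ*Q(t), S(t)]] is positive semidefinite. Let U, V : ℝ → Matrix (Fin n) (Fin n) ℝ with U(t) invertible for all t ∈ I, and define Q̃ = U⁻¹*Q*V, R̃ = Uᵀ*R*U, P̃ = Uᵀ*P. Then for each t ∈ I the transformed block matrix W̃(t) = [[Q̃(t)ᵀ*R̃(t)*Q̃(t), Q̃(t)ᵀ*P̃(t)], [P̃(t)ᵀ*Q̃(t), S(t)]] satisfies W̃(t) = diag(V(t), I_m)ᵀ * W(t) * diag(V(t), I_m), and in particular W̃(t) is positive semidefinite. -/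
open Matrix Set

/-- The dissipation matrix `W = [[QᵀRQ, QᵀP], [PᵀQ, S]]` transforms by congruence
with `diag(V, I)` under `Q̃ = U⁻¹QV`, `R̃ = UᵀRU`, `P̃ = UᵀP`; in particular positive
semidefiniteness is preserved. -/
theorem dissipation_matrix_congruence_transform
    (n m : ℕ) (I : Set ℝ)
    (Q R : ℝ → Matrix (Fin n) (Fin n) ℝ)
    (P : ℝ → Matrix (Fin n) (Fin m) ℝ)
    (S : ℝ → Matrix (Fin m) (Fin m) ℝ)
    (hW : ∀ t ∈ I, ∀ z : Fin n ⊕ Fin m → ℝ,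
      0 ≤ z ⬝ᵥ (Matrix.fromBlocks ((Q t)ᵀ * R t * Q t) ((Q t)ᵀ * P t)
        ((P t)ᵀ * Q t) (S t)) *ᵥ z)
    (U V : ℝ → Matrix (Fin n) (Fin n) ℝ)
    (hU : ∀ t ∈ I, IsUnit (U t)) :
    ∀ t ∈ I,
      Matrix.fromBlocks
          (((U t)⁻¹ * Q t * V t)ᵀ * ((U t)ᵀ * R t * U t) * ((U t)⁻¹ * Q t * V t))
          (((U t)⁻¹ * Q t * V t)ᵀ * ((U t)ᵀ * P t))
          (((U t)ᵀ * P t)ᵀ * ((U t)⁻¹ * Q t * V t)) (S t) =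
        (Matrix.fromBlocks (V t) 0 0 (1 : Matrix (Fin m) (Fin m) ℝ))ᵀ *
          (Matrix.fromBlocks ((Q t)ᵀ * R t * Q t) ((Q t)ᵀ * P t)
            ((P t)ᵀ * Q t) (S t)) *
          Matrix.fromBlocks (V t) 0 0 (1 : Matrix (Fin m) (Fin m) ℝ) ∧
      ∀ z : Fin n ⊕ Fin m → ℝ,
        0 ≤ z ⬝ᵥ (Matrix.fromBlocks
          (((U t)⁻¹ * Q t * V t)ᵀ * ((U t)ᵀ * R t * U t) * ((U t)⁻¹ * Q t * V t))
          (((U t)⁻¹ * Q t * V t)ᵀ * ((U t)ᵀ * P t))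
          (((U t)ᵀ * P t)ᵀ * ((U t)⁻¹ * Q t * V t)) (S t)) *ᵥ z := by
  intro t ht
  have hUt := hU t ht
  have h1 : (U t)⁻¹ᵀ * (U t)ᵀ = 1 := by
    rw [← Matrix.transpose_mul, Matrix.mul_nonsing_inv _ (Matrix.isUnit_iff_isUnit_det _ |>.mp hUt), Matrix.transpose_one]
  have h2 : (U t)ᵀ * (U t)⁻¹ᵀ = 1 := by
    rw [← Matrix.transpose_mul, Matrix.nonsing_inv_mul _ (Matrix.isUnit_iff_isUnit_det _ |>.mp hUt), Matrix.transpose_one]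
  have heq : Matrix.fromBlocks
          (((U t)⁻¹ * Q t * V t)ᵀ * ((U t)ᵀ * R t * U t) * ((U t)⁻¹ * Q t * V t))
          (((U t)⁻¹ * Q t * V t)ᵀ * ((U t)ᵀ * P t))
          (((U t)ᵀ * P t)ᵀ * ((U t)⁻¹ * Q t * V t)) (S t) =
        (Matrix.fromBlocks (V t) 0 0 (1 : Matrix (Fin m) (Fin m) ℝ))ᵀ *
          (Matrix.fromBlocks ((Q t)ᵀ * R t * Q t) ((Q t)ᵀ * P t)
            ((P t)ᵀ * Q t) (S t)) *
          Matrix.fromBlocks (V t) 0 0 (1 : Matrix (Fin m) (Fin m) ℝ) := by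
    rw [Matrix.fromBlocks_transpose, Matrix.fromBlocks_multiply, Matrix.fromBlocks_multiply]
    simp only [Matrix.transpose_mul, Matrix.transpose_zero, Matrix.transpose_one,
      Matrix.mul_zero, Matrix.zero_mul, add_zero, zero_add, Matrix.transpose_transpose, Matrix.mul_one,
      Matrix.one_mul]
    have hUU : U t * (U t)⁻¹ = 1 :=
      Matrix.mul_nonsing_inv _ (Matrix.isUnit_iff_isUnit_det _ |>.mp hUt)
    have hA : (V t)ᵀ * ((Q t)ᵀ * (U t)⁻¹ᵀ) * ((U t)ᵀ * R t * U t) * ((U t)⁻¹ * Q t * V t)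
        = (V t)ᵀ * ((Q t)ᵀ * R t * Q t) * V t := by
      simp only [Matrix.mul_assoc]
      rw [← Matrix.mul_assoc ((U t)⁻¹ᵀ), h1, Matrix.one_mul,
        ← Matrix.mul_assoc (U t) ((U t)⁻¹), hUU, Matrix.one_mul]
    have hB : (V t)ᵀ * ((Q t)ᵀ * (U t)⁻¹ᵀ) * ((U t)ᵀ * P t) = (V t)ᵀ * ((Q t)ᵀ * P t) := by
      simp only [Matrix.mul_assoc]
      rw [← Matrix.mul_assoc ((U t)⁻¹ᵀ), h1, Matrix.one_mul]
    have hC : (P t)ᵀ * (U t) * ((U t)⁻¹ * Q t * V t) = (P t)ᵀ * Q t * V t := by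
      simp only [Matrix.mul_assoc]
      rw [← Matrix.mul_assoc (U t) ((U t)⁻¹), hUU, Matrix.one_mul]
    rw [hA, hB, hC]
  refine ⟨heq, fun z => ?_⟩
  rw [heq]
  set M := Matrix.fromBlocks (V t) 0 0 (1 : Matrix (Fin m) (Fin m) ℝ)
  set W := Matrix.fromBlocks ((Q t)ᵀ * R t * Q t) ((Q t)ᵀ * P t) ((P t)ᵀ * Q t) (S t)
  have : z ⬝ᵥ (Mᵀ * W * M) *ᵥ z = (M *ᵥ z) ⬝ᵥ W *ᵥ (M *ᵥ z) := by
    rw [← Matrix.mulVec_mulVec, ← Matrix.mulVec_mulVec, Matrix.dotProduct_mulVec,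
      Matrix.vecMul_transpose]
  rw [this]
  exact hW t ht _
end

section
/- Let E, Q be C¹ and J, R, K, B, P continuous matrix functions on an interval I (with E, Q, J, R, K of size n×n and B, P of size n×m), let U : ℝ → Matrix (Fin n) (Fin n) ℝ be continuous with U(t) invertible for all t ∈ I, and let V : ℝ → Matrix (Fin n) (Fin n) ℝ be C¹ with V(t) invertible for all t ∈ I. Define Ẽ = Uᵀ*E*V, Q̃ = U⁻¹*Q*V, J̃ = Uᵀ*J*U, R̃ = Uᵀ*R*U, B̃ = Uᵀ*B, P̃ = Uᵀ*P, K̃ = V⁻¹*K*V + V⁻¹*V'. Let u : ℝ → ℝᵐ, let x : ℝ → ℝⁿ be C¹ satisfying E(t) ⬝ x'(t) = ((J(t)−R(t))*Q(t) − E(t)*K(t)) ⬝ x(t) + (B(t)−P(t)) ⬝ u(t) on I, and set x̃(t) = V(t)⁻¹ ⬝ x(t). Then x̃ is C¹ and satisfies the transformed state equation Ẽ(t) ⬝ x̃'(t) = ((J̃(t)−R̃(t))*Q̃(t) − Ẽ(t)*K̃(t)) ⬝ x̃(t) + (B̃(t)−P̃(t)) ⬝ u(t) for all t ∈ I; moreover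 the outputs agree, (B̃(t)+P̃(t))ᵀ*Q̃(t) ⬝ x̃(t) = (B(t)+P(t))ᵀ*Q(t) ⬝ x(t), and the Hamiltonian is invariant: (1/2)⟪x̃(t), (Q̃(t)ᵀ*Ẽ(t)) ⬝ x̃(t)⟫ = (1/2)⟪x(t), (Q(t)ᵀ*E(t)) ⬝ x(t)⟫ for all t ∈ I. -/
open Matrix Set

lemma differentiableAt_det' {n : ℕ} {M : ℝ → Matrix (Fin n) (Fin n) ℝ} {t : ℝ}
    (h : ∀ i j, DifferentiableAt ℝ (fun s => M s i j) t) :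
    DifferentiableAt ℝ (fun s => (M s).det) t := by
  simp only [Matrix.det_apply']
  exact DifferentiableAt.fun_sum fun σ _ =>
    (DifferentiableAt.fun_finsetProd (fun i _ => h (σ i) i)).const_mul _

lemma differentiableAt_adjugate' {n : ℕ} {M : ℝ → Matrix (Fin n) (Fin n) ℝ} {t : ℝ}
    (h : ∀ i j, DifferentiableAt ℝ (fun s => M s i j) t) (i j : Fin n) :
    DifferentiableAt ℝ (fun s => (M s).adjugate i j) t := by
  simp only [Matrix.adjugate_apply]
  apply differentiableAt_det'
  intro a b
  simp only [Matrix.updateRow_apply]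
  by_cases haj : a = j
  · simp [haj]
  · simpa [haj] using h a b

lemma differentiableAt_inv_entry' {n : ℕ} {M : ℝ → Matrix (Fin n) (Fin n) ℝ} {t : ℝ}
    (h : ∀ i j, DifferentiableAt ℝ (fun s => M s i j) t) (hdet : (M t).det ≠ 0)
    (i j : Fin n) : DifferentiableAt ℝ (fun s => (M s)⁻¹ i j) t := by
  simp only [Matrix.inv_def, Matrix.smul_apply, Ring.inverse_eq_inv', smul_eq_mul]
  exact ((differentiableAt_det' h).inv hdet).mul (differentiableAt_adjugate' h i j)

lemma matHasDerivAt_inv' {n : ℕ} {V Vd : ℝ → Matrix (Fin n) (Fin n) ℝ} {t : ℝ}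
    (hV : MatHasDerivAt V Vd t) (hu : IsUnit (V t)) :
    MatHasDerivAt (fun s => (V s)⁻¹) (fun s => -((V s)⁻¹ * Vd s * (V s)⁻¹)) t := by
  have hdet : IsUnit (V t).det := (Matrix.isUnit_iff_isUnit_det _).1 hu
  have hdetne : (V t).det ≠ 0 := hdet.ne_zero
  have h : ∀ i j, DifferentiableAt ℝ (fun s => (V s)⁻¹ i j) t :=
    differentiableAt_inv_entry' (fun i j => (hV i j).differentiableAt) hdetne
  set D : Matrix (Fin n) (Fin n) ℝ := Matrix.of fun i j => deriv (fun s => (V s)⁻¹ i j) t with hD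
  have hWd : ∀ i j, HasDerivAt (fun s => (V s)⁻¹ i j) (D i j) t := fun i j => (h i j).hasDerivAt
  have hprod : ∀ i j, HasDerivAt (fun s => (V s * (V s)⁻¹) i j)
      ((Vd t * (V t)⁻¹ + V t * D) i j) t := by
    intro i j
    have : HasDerivAt (fun s => ∑ k, V s i k * (V s)⁻¹ k j)
        (∑ k, (Vd t i k * (V t)⁻¹ k j + V t i k * D k j)) t :=
      HasDerivAt.fun_sum fun k _ => (hV i k).mul (hWd k j)
    simpa [Matrix.mul_apply, Matrix.add_apply, Finset.sum_add_distrib] using this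
  have hdetc : ContinuousAt (fun s => (V s).det) t :=
    (differentiableAt_det' fun i j => (hV i j).differentiableAt).continuousAt
  have hev : ∀ᶠ s in nhds t, (V s).det ≠ 0 := hdetc.eventually_ne hdetne
  have hzero : Vd t * (V t)⁻¹ + V t * D = 0 := by
    ext i j
    have h1 : HasDerivAt (fun _ : ℝ => (1 : Matrix (Fin n) (Fin n) ℝ) i j)
        ((Vd t * (V t)⁻¹ + V t * D) i j) t := by
      apply (hprod i j).congr_of_eventuallyEq
      filter_upwards [hev] with s hs
      rw [Matrix.mul_nonsing_inv _ (isUnit_iff_ne_zero.2 hs)]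
    have h2 := h1.unique (hasDerivAt_const _ _)
    simpa using h2
  have hD2 : D = -((V t)⁻¹ * Vd t * (V t)⁻¹) := by
    have h3 : V t * D = -(Vd t * (V t)⁻¹) :=
      eq_neg_of_add_eq_zero_right hzero
    have h4 : (V t)⁻¹ * (V t * D) = D := by
      rw [← Matrix.mul_assoc, Matrix.nonsing_inv_mul _ hdet, Matrix.one_mul]
    rw [← h4, h3, Matrix.mul_neg, Matrix.mul_assoc]
  intro i j
  have h5 := hWd i j
  rw [hD2] at h5
  exact h5

lemma continuousOn_entry {n' m' : Type*} {A : ℝ → Matrix n' m' ℝ} {s : Set ℝ}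
    (h : ContinuousOn A s) (i : n') (j : m') : ContinuousOn (fun t => A t i j) s :=
  (continuousOn_pi.1 (continuousOn_pi.1 h i)) j

lemma continuousOn_mulVec {n' m' : Type*} [Fintype m'] {A : ℝ → Matrix n' m' ℝ}
    {v : ℝ → m' → ℝ} {s : Set ℝ} (hA : ContinuousOn A s) (hv : ContinuousOn v s) :
    ContinuousOn (fun t => A t *ᵥ v t) s := by
  rw [continuousOn_pi]
  intro i
  simp only [Matrix.mulVec, dotProduct]
  exact continuousOn_finset_sum _ fun j _ =>
    (continuousOn_entry hA i j).mul (continuousOn_pi.1 hv j)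

/-- Under the change of basis `x = V x̃` together with a left scaling by `Uᵀ`, a
solution of a port-Hamiltonian descriptor system transforms into a solution of
the transformed system, the outputs agree, and the Hamiltonian is invariant. -/
theorem pHDAE_state_transformation
    (n m : ℕ) (I : Set ℝ)
    (E Q J R K : ℝ → Matrix (Fin n) (Fin n) ℝ)
    (B P : ℝ → Matrix (Fin n) (Fin m) ℝ)
    (Ed Qd : ℝ → Matrix (Fin n) (Fin n) ℝ)
    (hE : ∀ t ∈ I, MatHasDerivAt E Ed t) (hEdc : ContinuousOn Ed I)
    (hQ : ∀ t ∈ I, MatHasDerivAt Q Qd t) (hQdc : ContinuousOn Qd I)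
    (hJc : ContinuousOn J I) (hRc : ContinuousOn R I) (hKc : ContinuousOn K I)
    (hBc : ContinuousOn B I) (hPc : ContinuousOn P I)
    (U : ℝ → Matrix (Fin n) (Fin n) ℝ)
    (hUc : ContinuousOn U I) (hU : ∀ t ∈ I, IsUnit (U t))
    (V Vd : ℝ → Matrix (Fin n) (Fin n) ℝ)
    (hV : ∀ t ∈ I, MatHasDerivAt V Vd t) (hVdc : ContinuousOn Vd I)
    (hVinv : ∀ t ∈ I, IsUnit (V t))
    (tE tQ tJ tR tK : ℝ → Matrix (Fin n) (Fin n) ℝ)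
    (tB tP : ℝ → Matrix (Fin n) (Fin m) ℝ)
    (htE : ∀ t, tE t = (U t)ᵀ * E t * V t)
    (htQ : ∀ t, tQ t = (U t)⁻¹ * Q t * V t)
    (htJ : ∀ t, tJ t = (U t)ᵀ * J t * U t)
    (htR : ∀ t, tR t = (U t)ᵀ * R t * U t)
    (htB : ∀ t, tB t = (U t)ᵀ * B t)
    (htP : ∀ t, tP t = (U t)ᵀ * P t)
    (htK : ∀ t, tK t = (V t)⁻¹ * K t * V t + (V t)⁻¹ * Vd t)
    (u : ℝ → Fin m → ℝ)
    (x x' : ℝ → Fin n → ℝ)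
    (hx : ∀ t ∈ I, HasDerivAt x (x' t) t) (hx'c : ContinuousOn x' I)
    (hode : ∀ t ∈ I, E t *ᵥ x' t =
      ((J t - R t) * Q t - E t * K t) *ᵥ x t + (B t - P t) *ᵥ u t) :
    (∃ xtd : ℝ → Fin n → ℝ,
      (∀ t ∈ I, HasDerivAt (fun s => (V s)⁻¹ *ᵥ x s) (xtd t) t) ∧
      ContinuousOn xtd I ∧
      (∀ t ∈ I, tE t *ᵥ xtd t =
        ((tJ t - tR t) * tQ t - tE t * tK t) *ᵥ ((V t)⁻¹ *ᵥ x t) +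
          (tB t - tP t) *ᵥ u t)) ∧
    (∀ t ∈ I, ((tB t + tP t)ᵀ * tQ t) *ᵥ ((V t)⁻¹ *ᵥ x t) =
      ((B t + P t)ᵀ * Q t) *ᵥ x t) ∧
    (∀ t ∈ I, (1 / 2 : ℝ) * (((V t)⁻¹ *ᵥ x t) ⬝ᵥ ((tQ t)ᵀ * tE t) *ᵥ ((V t)⁻¹ *ᵥ x t)) =
      (1 / 2 : ℝ) * (x t ⬝ᵥ ((Q t)ᵀ * E t) *ᵥ x t)) := by
  -- basic unit facts
  have hVdet : ∀ t ∈ I, IsUnit (V t).det := fun t ht =>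
    (Matrix.isUnit_iff_isUnit_det _).1 (hVinv t ht)
  have hUdet : ∀ t ∈ I, IsUnit (U t).det := fun t ht =>
    (Matrix.isUnit_iff_isUnit_det _).1 (hU t ht)
  have hVW : ∀ t ∈ I, V t * (V t)⁻¹ = 1 := fun t ht => Matrix.mul_nonsing_inv _ (hVdet t ht)
  have hWV : ∀ t ∈ I, (V t)⁻¹ * V t = 1 := fun t ht => Matrix.nonsing_inv_mul _ (hVdet t ht)
  have hUU : ∀ t ∈ I, U t * (U t)⁻¹ = 1 := fun t ht => Matrix.mul_nonsing_inv _ (hUdet t ht)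
  -- derivative of the inverse
  have hW : ∀ t ∈ I, MatHasDerivAt (fun s => (V s)⁻¹)
      (fun s => -((V s)⁻¹ * Vd s * (V s)⁻¹)) t :=
    fun t ht => matHasDerivAt_inv' (hV t ht) (hVinv t ht)
  set Wd : ℝ → Matrix (Fin n) (Fin n) ℝ := fun s => -((V s)⁻¹ * Vd s * (V s)⁻¹) with hWddef
  set xtd : ℝ → Fin n → ℝ := fun t => Wd t *ᵥ x t + (V t)⁻¹ *ᵥ x' t with hxtddef
  -- continuity facts
  have hWc : ContinuousOn (fun s => (V s)⁻¹) I := by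
    refine continuousOn_pi.2 fun i => continuousOn_pi.2 fun j => ?_
    intro t ht
    exact (differentiableAt_inv_entry' (fun a b => (hV t ht a b).differentiableAt)
      (hVdet t ht).ne_zero i j).continuousAt.continuousWithinAt
  have hxc : ContinuousOn x I := by
    intro t ht
    exact (hx t ht).continuousAt.continuousWithinAt
  have hWdc : ContinuousOn Wd I := by
    rw [hWddef]; fun_prop
  have hxtdc : ContinuousOn xtd I :=
    (continuousOn_mulVec hWdc hxc).add (continuousOn_mulVec hWc hx'c)
  -- the derivative of the transformed state
  have hderiv : ∀ t ∈ I, HasDerivAt (fun s => (V s)⁻¹ *ᵥ x s) (xtd t) t := by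
    intro t ht
    rw [hasDerivAt_pi]
    intro i
    have hxk : ∀ k, HasDerivAt (fun s => x s k) (x' t k) t :=
      fun k => hasDerivAt_pi.1 (hx t ht) k
    have hs : HasDerivAt (fun s => ∑ j, (V s)⁻¹ i j * x s j)
        (∑ j, (Wd t i j * x t j + (V t)⁻¹ i j * x' t j)) t :=
      HasDerivAt.fun_sum fun j _ => (hW t ht i j).mul (hxk j)
    have e1 : (fun s => ((V s)⁻¹ *ᵥ x s) i) = fun s => ∑ j, (V s)⁻¹ i j * x s j := by
      funext s; simp [Matrix.mulVec, dotProduct]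
    rw [e1]
    refine hs.congr_deriv ?_
    simp [hxtddef, Matrix.mulVec, dotProduct, Finset.sum_add_distrib]
  refine ⟨⟨xtd, hderiv, hxtdc, ?_⟩, ?_, ?_⟩
  · -- transformed ODE
    intro t ht
    rw [htE, htJ, htR, htQ, htB, htP, htK]
    have hcV : ∀ Z : Matrix (Fin n) (Fin n) ℝ, V t * ((V t)⁻¹ * Z) = Z := fun Z => by
      rw [← Matrix.mul_assoc, hVW t ht, Matrix.one_mul]
    have hcU : ∀ Z : Matrix (Fin n) (Fin n) ℝ, U t * ((U t)⁻¹ * Z) = Z := fun Z => by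
      rw [← Matrix.mul_assoc, hUU t ht, Matrix.one_mul]
    have h6 : ((U t)ᵀ * E t) *ᵥ x' t =
        ((U t)ᵀ * ((J t - R t) * Q t - E t * K t)) *ᵥ x t +
        ((U t)ᵀ * (B t - P t)) *ᵥ u t := by
      rw [← Matrix.mulVec_mulVec, hode t ht, Matrix.mulVec_add,
        Matrix.mulVec_mulVec, Matrix.mulVec_mulVec]
    have hL : ((U t)ᵀ * E t * V t) *ᵥ xtd t =
        (-((U t)ᵀ * (E t * (Vd t * (V t)⁻¹)))) *ᵥ x t + ((U t)ᵀ * E t) *ᵥ x' t := by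
      rw [hxtddef]
      simp only [Matrix.mulVec_add, Matrix.mulVec_mulVec]
      congr 2
      · rw [hWddef]
        simp only [Matrix.mul_neg, Matrix.mul_assoc, hcV]
      · simp only [Matrix.mul_assoc, hVW t ht, Matrix.mul_one]
    rw [hL, h6]
    have hM : (((U t)ᵀ * J t * U t - (U t)ᵀ * R t * U t) * ((U t)⁻¹ * Q t * V t) -
        (U t)ᵀ * E t * V t * ((V t)⁻¹ * K t * V t + (V t)⁻¹ * Vd t)) * (V t)⁻¹
        = (U t)ᵀ * ((J t - R t) * Q t - E t * K t) -
          (U t)ᵀ * (E t * (Vd t * (V t)⁻¹)) := by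
      simp only [Matrix.sub_mul, Matrix.mul_sub, Matrix.mul_add, Matrix.add_mul,
        Matrix.mul_assoc, hcU, hcV, hVW t ht, Matrix.mul_one]
      abel
    simp only [Matrix.mulVec_mulVec]
    rw [hM]
    simp only [Matrix.mul_sub, Matrix.sub_mulVec, Matrix.neg_mulVec]
    abel
  · -- output equation
    intro t ht
    rw [htB, htP, htQ]
    rw [Matrix.mulVec_mulVec]
    rw [← Matrix.mul_add, Matrix.transpose_mul]
    have hcU : ∀ Z : Matrix (Fin n) (Fin n) ℝ, U t * ((U t)⁻¹ * Z) = Z := fun Z => by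
      rw [← Matrix.mul_assoc, hUU t ht, Matrix.one_mul]
    simp only [Matrix.transpose_transpose, Matrix.mul_assoc, hVW t ht, Matrix.mul_one, hcU]
  · -- Hamiltonian invariance
    intro t ht
    have hVx : V t *ᵥ ((V t)⁻¹ *ᵥ x t) = x t := by
      rw [Matrix.mulVec_mulVec, hVW t ht, Matrix.one_mulVec]
    congr 1
    rw [htQ, htE]
    have hcUT : ∀ Z : Matrix (Fin n) (Fin n) ℝ, ((U t)⁻¹)ᵀ * ((U t)ᵀ * Z) = Z := fun Z => by
      rw [← Matrix.mul_assoc, ← Matrix.transpose_mul, hUU t ht, Matrix.transpose_one,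
        Matrix.one_mul]
    have hmat : ((U t)⁻¹ * Q t * V t)ᵀ * ((U t)ᵀ * E t * V t)
        = (V t)ᵀ * ((Q t)ᵀ * E t) * V t := by
      simp only [Matrix.transpose_mul, Matrix.mul_assoc, hcUT]
    conv_lhs => rw [hmat, ← Matrix.mulVec_mulVec, hVx, ← Matrix.mulVec_mulVec,
      Matrix.dotProduct_mulVec, Matrix.vecMul_transpose, hVx]
end

section
/- Let K : ℝ → Matrix (Fin n) (Fin n) ℝ be continuous on an interval I containing t0 with K(t)ᵀ = −K(t) for all t ∈ I, and let V : ℝ → Matrix (Fin n) (Fin n) ℝ be continuously differentiable with V(t0) = I_n and V'(t) = V(t) * K(t) for all t ∈ I. Then V(t) * V(t)ᵀ = I_n for all t ∈ I; that is, the solution of the matrix differential equation V' = VK with skew-symmetric K and identity initial value is pointwise orthogonal. -/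
open Matrix Set

/-- If `K` is pointwise skew-symmetric on an interval `I` containing `t0` and
`V` solves `V' = V K` with `V(t0) = I`, then `V` is pointwise orthogonal. -/
theorem solution_matrixODE_skew_is_orthogonal
    (n : ℕ) (t0 : ℝ) (I : Set ℝ) (hI : Convex ℝ I) (ht0 : t0 ∈ I)
    (K V : ℝ → Matrix (Fin n) (Fin n) ℝ)
    (hKc : ContinuousOn K I)
    (hKskew : ∀ t ∈ I, (K t)ᵀ = -K t)
    (hVc : ContinuousOn V I)
    (hV0 : V t0 = 1)
    (hV : ∀ t ∈ I, MatHasDerivAt V (fun s => V s * K s) t) :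
    ∀ t ∈ I, V t * (V t)ᵀ = 1 := by
  intro t ht
  ext i j
  -- the entry function and its zero derivative
  have key : ∀ s ∈ I,
      HasDerivAt (fun u => ∑ k, V u i k * V u j k) 0 s := by
    intro s hs
    have hd : HasDerivAt (fun u => ∑ k, V u i k * V u j k)
        (∑ k, ((V s * K s) i k * V s j k + V s i k * (V s * K s) j k)) s := by
      apply HasDerivAt.fun_sum
      intro k _
      exact ((hV s hs) i k).mul ((hV s hs) j k)
    have hzero : (∑ k, ((V s * K s) i k * V s j k + V s i k * (V s * K s) j k)) = 0 := by
      have h1 : (∑ k, (V s * K s) i k * V s j k) = (V s * K s * (V s)ᵀ) i j := by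
        simp [Matrix.mul_apply, Matrix.transpose_apply]
      have h2 : (∑ k, V s i k * (V s * K s) j k) = (V s * (K s)ᵀ * (V s)ᵀ) i j := by
        rw [Matrix.mul_assoc]
        simp [Matrix.mul_apply, Matrix.transpose_apply, Finset.mul_sum, mul_comm,
          mul_left_comm]
      rw [Finset.sum_add_distrib, h1, h2, hKskew s hs]
      simp
    rwa [hzero] at hd
  have hzero := Convex.norm_image_sub_le_of_norm_hasFDerivWithin_le
    (f := fun u => ∑ k, V u i k * V u j k)
    (f' := fun _ => ContinuousLinearMap.smulRight (1 : ℝ →L[ℝ] ℝ) 0) (C := 0)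
    (fun s hs => ((key s hs).hasDerivWithinAt).hasFDerivWithinAt)
    (fun s _ => by simp) hI ht0 ht
  simp only [norm_zero, zero_mul, norm_le_zero_iff, sub_eq_zero] at hzero
  have : (V t * (V t)ᵀ) i j = (V t0 * (V t0)ᵀ) i j := by
    simpa [Matrix.mul_apply, Matrix.transpose_apply] using hzero
  rw [this, hV0]
  simp
end

section
/- Consider a block-partitioned descriptor system on an interval I with state x = (x₁, x₂) (x₁ : ℝ → ℝ^{n₁} C¹, x₂ : ℝ → ℝ^{n₂} continuous), input u : ℝ → ℝᵐ, and matrix functions E₁₁, Q₁₁, J₁₁, R₁₁, K₁₁ (n₁×n₁), L₁₂ = J₁₂ − R₁₂ (n₁×n₂), L₂₁ = J₂₁ − R₁₂ᵀ (n₂×n₁), L₂₂ = J₂₂ − R₂₂ (n₂×n₂), Q₂₂ (n₂×n₂), K₁₂ (n₁×n₂), B₁, P₁ (n₁×m), B₂, P₂ (n₂×m), satisfying for every t ∈ I: (first block row) E₁₁ ⬝ x₁' = (J₁₁−R₁₁)*Q₁₁ ⬝ x₁ + L₁₂*Q₂₂ ⬝ x₂ − E₁₁*K₁₁ ⬝ x₁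 − E₁₁*K₁₂ ⬝ x₂ + (B₁−P₁) ⬝ u; (second block row) 0 = L₂₁*Q₁₁ ⬝ x₁ + L₂₂*Q₂₂ ⬝ x₂ + (B₂−P₂) ⬝ u; the index-one compatibility condition L₁₂(t)*Q₂₂(t) − E₁₁(t)*K₁₂(t) = 0; and L₂₂(t)*Q₂₂(t) invertible. Then for all t ∈ I: (a) x₂ is uniquely determined by x₁ and u via x₂(t) = −(L₂₂(t)*Q₂₂(t))⁻¹ ⬝ (L₂₁(t)*Q₁₁(t) ⬝ x₁(t) + (B₂(t)−P₂(t)) ⬝ u(t)); and (b) x₁ satisfies the reduced state equation E₁₁(t) ⬝ x₁'(t) = ((J₁₁(t)−R₁₁(t))*Q₁₁(t) − E₁₁(t)*K₁₁(t)) ⬝ x₁(t) + (B₁(t)−P₁(t)) ⬝ u(t). -/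
open Matrix Set

/-- In a block-partitioned port-Hamiltonian descriptor system of
differentiation-index at most one, the algebraic variable `x₂` is uniquely
determined by `x₁` and `u`, and `x₁` satisfies the reduced state equation. -/
theorem index_one_block_reduction
    (n₁ n₂ m : ℕ) (I : Set ℝ)
    (E₁₁ Q₁₁ J₁₁ R₁₁ K₁₁ : ℝ → Matrix (Fin n₁) (Fin n₁) ℝ)
    (J₁₂ R₁₂ K₁₂ : ℝ → Matrix (Fin n₁) (Fin n₂) ℝ)
    (J₂₁ : ℝ → Matrix (Fin n₂) (Fin n₁) ℝ)
    (J₂₂ R₂₂ Q₂₂ : ℝ → Matrix (Fin n₂) (Fin n₂) ℝ)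
    (B₁ P₁ : ℝ → Matrix (Fin n₁) (Fin m) ℝ)
    (B₂ P₂ : ℝ → Matrix (Fin n₂) (Fin m) ℝ)
    (u : ℝ → Fin m → ℝ)
    (x₁ x₁' : ℝ → Fin n₁ → ℝ) (x₂ : ℝ → Fin n₂ → ℝ)
    (hx₁ : ∀ t ∈ I, HasDerivAt x₁ (x₁' t) t)
    (hx₁'c : ContinuousOn x₁' I)
    (hx₂c : ContinuousOn x₂ I)
    (hrow1 : ∀ t ∈ I, E₁₁ t *ᵥ x₁' t =
      ((J₁₁ t - R₁₁ t) * Q₁₁ t) *ᵥ x₁ t + ((J₁₂ t - R₁₂ t) * Q₂₂ t) *ᵥ x₂ t -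
        (E₁₁ t * K₁₁ t) *ᵥ x₁ t - (E₁₁ t * K₁₂ t) *ᵥ x₂ t + (B₁ t - P₁ t) *ᵥ u t)
    (hrow2 : ∀ t ∈ I, (0 : Fin n₂ → ℝ) =
      ((J₂₁ t - (R₁₂ t)ᵀ) * Q₁₁ t) *ᵥ x₁ t + ((J₂₂ t - R₂₂ t) * Q₂₂ t) *ᵥ x₂ t +
        (B₂ t - P₂ t) *ᵥ u t)
    (hcompat : ∀ t ∈ I, (J₁₂ t - R₁₂ t) * Q₂₂ t - E₁₁ t * K₁₂ t = 0)
    (hinv : ∀ t ∈ I, IsUnit ((J₂₂ t - R₂₂ t) * Q₂₂ t)) :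
    ∀ t ∈ I,
      x₂ t = -(((J₂₂ t - R₂₂ t) * Q₂₂ t)⁻¹ *ᵥ
        (((J₂₁ t - (R₁₂ t)ᵀ) * Q₁₁ t) *ᵥ x₁ t + (B₂ t - P₂ t) *ᵥ u t)) ∧
      E₁₁ t *ᵥ x₁' t =
        ((J₁₁ t - R₁₁ t) * Q₁₁ t - E₁₁ t * K₁₁ t) *ᵥ x₁ t + (B₁ t - P₁ t) *ᵥ u t := by
  intro t ht
  have h2 := hrow2 t ht
  have hc := hcompat t ht
  constructor
  · have hA : ((J₂₂ t - R₂₂ t) * Q₂₂ t) *ᵥ x₂ t =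
        -(((J₂₁ t - (R₁₂ t)ᵀ) * Q₁₁ t) *ᵥ x₁ t + (B₂ t - P₂ t) *ᵥ u t) := by
      have := h2.symm
      linear_combination (norm := module) this
    have : ((J₂₂ t - R₂₂ t) * Q₂₂ t)⁻¹ *ᵥ (((J₂₂ t - R₂₂ t) * Q₂₂ t) *ᵥ x₂ t)
        = ((J₂₂ t - R₂₂ t) * Q₂₂ t)⁻¹ *ᵥ
          (-(((J₂₁ t - (R₁₂ t)ᵀ) * Q₁₁ t) *ᵥ x₁ t + (B₂ t - P₂ t) *ᵥ u t)) := by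
      rw [hA]
    rwa [mulVec_mulVec, Matrix.nonsing_inv_mul _ ((Matrix.isUnit_iff_isUnit_det _).mp (hinv t ht)), one_mulVec, mulVec_neg] at this
  · have h1 := hrow1 t ht
    have hz : ((J₁₂ t - R₁₂ t) * Q₂₂ t) *ᵥ x₂ t - (E₁₁ t * K₁₂ t) *ᵥ x₂ t = 0 := by
      rw [← sub_mulVec, hc, zero_mulVec]
    have he : (E₁₁ t * K₁₂ t) *ᵥ x₂ t = ((J₁₂ t - R₁₂ t) * Q₂₂ t) *ᵥ x₂ t :=
      (sub_eq_zero.mp hz).symm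
    rw [h1, he]
    simp only [sub_mulVec]
    abel
end

section
/- With the notation of the block-partitioned index-one system: let L₂₂ = J₂₂ − R₂₂ and Q₂₂ be n₂×n₂ matrices with L₂₂ and Q₂₂ invertible, and suppose x₂ = −Q₂₂⁻¹ * L₂₂⁻¹ ⬝ (L₂₁*Q₁₁ ⬝ x₁ + (B₂−P₂) ⬝ u) with L₂₁ = J₂₁ − R₁₂ᵀ. Define B̂ = B₁ − (1/2)*(J₂₁ᵀ − R₁₂)*L₂₂⁻ᵀ*(B₂+P₂), P̂ = P₁ − (1/2)*(J₂₁ᵀ − R₁₂)*L₂₂⁻ᵀ*(B₂+P₂), Ŝ = S − (1/2)*((B₂+P₂)ᵀ*L₂₂⁻¹*(B₂−P₂) + (B₂−P₂)ᵀ*L₂₂⁻ᵀ*(B₂+P₂)), and N̂ = N − (1/2)*((B₂+P₂)ᵀ*L₂₂⁻¹*(B₂−P₂) − (B₂−P₂)ᵀ*L₂₂⁻ᵀ*(B₂+P₂)). Then the output of the full system equals the output of the reduced system: (B₁+P₁)ᵀ*Q₁₁ ⬝ x₁ + (B₂+P₂)ᵀ*Q₂₂ ⬝ x₂ + (S+N)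 ⬝ u = (B̂+P̂)ᵀ*Q₁₁ ⬝ x₁ + (Ŝ+N̂) ⬝ u. Moreover B̂ − P̂ = B₁ − P₁, and if Sᵀ = S and Nᵀ = −N then Ŝᵀ = Ŝ and N̂ᵀ = −N̂. -/
open Matrix Set

/-- Output-reduction step of the index-one reduction theorem: after eliminating
the algebraic variable `x₂`, the output of the full system equals the output of
the reduced system with modified port and feed-through matrices; moreover
`B̂ − P̂ = B₁ − P₁`, and `Ŝ`, `N̂` inherit (skew-)symmetry from `S`, `N`. -/
theorem index_one_output_reduction
    (n₁ n₂ m : ℕ)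
    (Q₁₁ : Matrix (Fin n₁) (Fin n₁) ℝ)
    (Q₂₂ J₂₂ R₂₂ L₂₂ : Matrix (Fin n₂) (Fin n₂) ℝ)
    (R₁₂ : Matrix (Fin n₁) (Fin n₂) ℝ)
    (J₂₁ L₂₁ : Matrix (Fin n₂) (Fin n₁) ℝ)
    (B₁ P₁ : Matrix (Fin n₁) (Fin m) ℝ)
    (B₂ P₂ : Matrix (Fin n₂) (Fin m) ℝ)
    (S N : Matrix (Fin m) (Fin m) ℝ)
    (hL₂₂ : L₂₂ = J₂₂ - R₂₂) (hL₂₁ : L₂₁ = J₂₁ - R₁₂ᵀ)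
    (hL₂₂inv : IsUnit L₂₂) (hQ₂₂inv : IsUnit Q₂₂)
    (Bh Ph : Matrix (Fin n₁) (Fin m) ℝ)
    (Sh Nh : Matrix (Fin m) (Fin m) ℝ)
    (hBh : Bh = B₁ - (1 / 2 : ℝ) • ((J₂₁ᵀ - R₁₂) * (L₂₂⁻¹)ᵀ * (B₂ + P₂)))
    (hPh : Ph = P₁ - (1 / 2 : ℝ) • ((J₂₁ᵀ - R₁₂) * (L₂₂⁻¹)ᵀ * (B₂ + P₂)))
    (hSh : Sh = S - (1 / 2 : ℝ) • ((B₂ + P₂)ᵀ * L₂₂⁻¹ * (B₂ - P₂) +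
      (B₂ - P₂)ᵀ * (L₂₂⁻¹)ᵀ * (B₂ + P₂)))
    (hNh : Nh = N - (1 / 2 : ℝ) • ((B₂ + P₂)ᵀ * L₂₂⁻¹ * (B₂ - P₂) -
      (B₂ - P₂)ᵀ * (L₂₂⁻¹)ᵀ * (B₂ + P₂)))
    (x₁ : Fin n₁ → ℝ) (u : Fin m → ℝ) (x₂ : Fin n₂ → ℝ)
    (hx₂ : x₂ = -((Q₂₂⁻¹ * L₂₂⁻¹) *ᵥ ((L₂₁ * Q₁₁) *ᵥ x₁ + (B₂ - P₂) *ᵥ u))) :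
    ((B₁ + P₁)ᵀ * Q₁₁) *ᵥ x₁ + ((B₂ + P₂)ᵀ * Q₂₂) *ᵥ x₂ + (S + N) *ᵥ u =
      ((Bh + Ph)ᵀ * Q₁₁) *ᵥ x₁ + (Sh + Nh) *ᵥ u ∧
    Bh - Ph = B₁ - P₁ ∧
    (Sᵀ = S → Nᵀ = -N → Shᵀ = Sh ∧ Nhᵀ = -Nh) := by
  have hQ : Q₂₂ * Q₂₂⁻¹ = 1 :=
    Matrix.mul_nonsing_inv Q₂₂ ((Matrix.isUnit_iff_isUnit_det _).mp hQ₂₂inv)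
  -- key matrix identities
  have hT : ((J₂₁ᵀ - R₁₂) * (L₂₂⁻¹)ᵀ * (B₂ + P₂))ᵀ = (B₂ + P₂)ᵀ * L₂₂⁻¹ * L₂₁ := by
    simp [Matrix.transpose_mul, hL₂₁, Matrix.mul_assoc]
  have key1 : (Bh + Ph)ᵀ * Q₁₁ =
      (B₁ + P₁)ᵀ * Q₁₁ - (B₂ + P₂)ᵀ * L₂₂⁻¹ * (L₂₁ * Q₁₁) := by
    rw [hBh, hPh]
    have : Bh + Ph = (B₁ + P₁) - ((J₂₁ᵀ - R₁₂) * (L₂₂⁻¹)ᵀ * (B₂ + P₂)) := by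
      rw [hBh, hPh]; module
    rw [hBh, hPh] at this
    rw [this, Matrix.transpose_sub, hT, Matrix.sub_mul, Matrix.mul_assoc]
  have key2 : Sh + Nh = S + N - (B₂ + P₂)ᵀ * L₂₂⁻¹ * (B₂ - P₂) := by
    rw [hSh, hNh]; module
  constructor
  · have hx : ((B₂ + P₂)ᵀ * Q₂₂) *ᵥ x₂ =
        -(((B₂ + P₂)ᵀ * L₂₂⁻¹ * (L₂₁ * Q₁₁)) *ᵥ x₁
          + ((B₂ + P₂)ᵀ * L₂₂⁻¹ * (B₂ - P₂)) *ᵥ u) := by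
      rw [hx₂, Matrix.mulVec_neg, Matrix.mulVec_mulVec]
      have : (B₂ + P₂)ᵀ * Q₂₂ * (Q₂₂⁻¹ * L₂₂⁻¹) = (B₂ + P₂)ᵀ * L₂₂⁻¹ := by
        rw [Matrix.mul_assoc, ← Matrix.mul_assoc Q₂₂, hQ, Matrix.one_mul]
      rw [this, Matrix.mulVec_add, Matrix.mulVec_mulVec, Matrix.mulVec_mulVec]
    rw [hx, key1, key2, Matrix.sub_mulVec, Matrix.sub_mulVec]
    abel
  refine ⟨by rw [hBh, hPh]; abel, fun hS hN => ⟨?_, ?_⟩⟩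
  · rw [hSh]
    simp only [Matrix.transpose_sub, Matrix.transpose_smul, Matrix.transpose_add,
      Matrix.transpose_mul, Matrix.transpose_transpose, hS, Matrix.mul_assoc]
    module
  · rw [hNh]
    simp only [Matrix.transpose_sub, Matrix.transpose_smul,
      Matrix.transpose_mul, Matrix.transpose_transpose, hN, Matrix.mul_assoc]
    module
end

section
/- Let E₁₁, Q₁₁, J₁₁, K₁₁ : ℝ → Matrix (Fin n₁) (Fin n₁) ℝ, J₁₂, K₁₂ : ℝ → Matrix (Fin n₁) (Fin n₂) ℝ, J₂₁ : ℝ → Matrix (Fin n₂) (Fin n₁) ℝ, J₂₂, Q₂₂ : ℝ → Matrix (Fin n₂) (Fin n₂) ℝ, with E₁₁, Q₁₁, Q₂₂ C¹ and the others continuous on an interval I. Form the block matrices E = diag(E₁₁, 0), Q = diag(Q₁₁, Q₂₂), J = [[J₁₁, J₁₂],[J₂₁, J₂₂]], K = [[K₁₁, K₁₂],[K₂₁, K₂₂]] (with arbitrary continuous K₂₁, K₂₂), and assume the skew-adjointness conditions Q(t)ᵀ*E(t) = E(t)ᵀ*Q(t) and (d/dt)(Q(t)ᵀ*E(t)) =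 Q(t)ᵀ*(E(t)*K(t) − J(t)*Q(t)) + (E(t)*K(t) − J(t)*Q(t))ᵀ*Q(t) hold for all t ∈ I. Then for all t ∈ I the following block identities hold: (i) Q₁₁ᵀ*E₁₁ = E₁₁ᵀ*Q₁₁; (ii) (d/dt)(Q₁₁ᵀ*E₁₁) = Q₁₁ᵀ*(E₁₁*K₁₁ − J₁₁*Q₁₁) + (E₁₁*K₁₁ − J₁₁*Q₁₁)ᵀ*Q₁₁; (iii) Q₁₁ᵀ*(J₁₂ + J₂₁ᵀ)*Q₂₂ = Q₁₁ᵀ*E₁₁*K₁₂; (iv) Q₂₂ᵀ*J₂₂*Q₂₂ + Q₂₂ᵀ*J₂₂ᵀ*Q₂₂ = 0. In particular, the reduced operator Q₁₁ᵀE₁₁ (d/dt) − Q₁₁ᵀ(J₁₁Q₁₁ − E₁₁K₁₁) is skew-adjoint. -/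
open Matrix Set

/-- Reading off the blocks of the skew-adjointness conditions for a
port-Hamiltonian descriptor system with `E = diag(E₁₁, 0)` and
`Q = diag(Q₁₁, Q₂₂)`: the reduced operator in the variable `x₁` is again
skew-adjoint, and the off-diagonal and lower-diagonal identities hold. -/
theorem block_skewAdjointness_identities
    (n₁ n₂ : ℕ) (I : Set ℝ)
    (E₁₁ Q₁₁ J₁₁ K₁₁ : ℝ → Matrix (Fin n₁) (Fin n₁) ℝ)
    (J₁₂ K₁₂ : ℝ → Matrix (Fin n₁) (Fin n₂) ℝ)
    (J₂₁ K₂₁ : ℝ → Matrix (Fin n₂) (Fin n₁) ℝ)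
    (J₂₂ Q₂₂ K₂₂ : ℝ → Matrix (Fin n₂) (Fin n₂) ℝ)
    (E₁₁d Q₁₁d : ℝ → Matrix (Fin n₁) (Fin n₁) ℝ)
    (Q₂₂d : ℝ → Matrix (Fin n₂) (Fin n₂) ℝ)
    (hE₁₁ : ∀ t ∈ I, MatHasDerivAt E₁₁ E₁₁d t) (hE₁₁dc : ContinuousOn E₁₁d I)
    (hQ₁₁ : ∀ t ∈ I, MatHasDerivAt Q₁₁ Q₁₁d t) (hQ₁₁dc : ContinuousOn Q₁₁d I)
    (hQ₂₂ : ∀ t ∈ I, MatHasDerivAt Q₂₂ Q₂₂d t) (hQ₂₂dc : ContinuousOn Q₂₂d I)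
    (hJ₁₁c : ContinuousOn J₁₁ I) (hJ₁₂c : ContinuousOn J₁₂ I)
    (hJ₂₁c : ContinuousOn J₂₁ I) (hJ₂₂c : ContinuousOn J₂₂ I)
    (hK₁₁c : ContinuousOn K₁₁ I) (hK₁₂c : ContinuousOn K₁₂ I)
    (hK₂₁c : ContinuousOn K₂₁ I) (hK₂₂c : ContinuousOn K₂₂ I)
    (Eb Qb Jb Kb : ℝ → Matrix (Fin n₁ ⊕ Fin n₂) (Fin n₁ ⊕ Fin n₂) ℝ)
    (hEb : ∀ t, Eb t = Matrix.fromBlocks (E₁₁ t) 0 0 0)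
    (hQb : ∀ t, Qb t = Matrix.fromBlocks (Q₁₁ t) 0 0 (Q₂₂ t))
    (hJb : ∀ t, Jb t = Matrix.fromBlocks (J₁₁ t) (J₁₂ t) (J₂₁ t) (J₂₂ t))
    (hKb : ∀ t, Kb t = Matrix.fromBlocks (K₁₁ t) (K₁₂ t) (K₂₁ t) (K₂₂ t))
    (hsym : ∀ t ∈ I, (Qb t)ᵀ * Eb t = (Eb t)ᵀ * Qb t)
    (hQE : ∀ t ∈ I,
      MatHasDerivAt (fun s => (Qb s)ᵀ * Eb s)
        (fun s => (Qb s)ᵀ * (Eb s * Kb s - Jb s * Qb s) +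
          (Eb s * Kb s - Jb s * Qb s)ᵀ * Qb s) t) :
    ∀ t ∈ I,
      (Q₁₁ t)ᵀ * E₁₁ t = (E₁₁ t)ᵀ * Q₁₁ t ∧
      MatHasDerivAt (fun s => (Q₁₁ s)ᵀ * E₁₁ s)
        (fun s => (Q₁₁ s)ᵀ * (E₁₁ s * K₁₁ s - J₁₁ s * Q₁₁ s) +
          (E₁₁ s * K₁₁ s - J₁₁ s * Q₁₁ s)ᵀ * Q₁₁ s) t ∧
      (Q₁₁ t)ᵀ * (J₁₂ t + (J₂₁ t)ᵀ) * Q₂₂ t = (Q₁₁ t)ᵀ * E₁₁ t * K₁₂ t ∧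
      (Q₂₂ t)ᵀ * J₂₂ t * Q₂₂ t + (Q₂₂ t)ᵀ * (J₂₂ t)ᵀ * Q₂₂ t = 0 := by
  intro t ht
  have hF : ∀ s, (Qb s)ᵀ * Eb s
      = Matrix.fromBlocks ((Q₁₁ s)ᵀ * E₁₁ s) 0 0 0 := by
    intro s
    rw [hEb, hQb]
    simp [Matrix.fromBlocks_transpose, Matrix.fromBlocks_multiply]
  have hG : ∀ s, (Qb s)ᵀ * (Eb s * Kb s - Jb s * Qb s) +
        (Eb s * Kb s - Jb s * Qb s)ᵀ * Qb s
      = Matrix.fromBlocks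
          ((Q₁₁ s)ᵀ * (E₁₁ s * K₁₁ s - J₁₁ s * Q₁₁ s) +
            (E₁₁ s * K₁₁ s - J₁₁ s * Q₁₁ s)ᵀ * Q₁₁ s)
          ((Q₁₁ s)ᵀ * E₁₁ s * K₁₂ s - (Q₁₁ s)ᵀ * (J₁₂ s + (J₂₁ s)ᵀ) * Q₂₂ s)
          ((E₁₁ s * K₁₂ s)ᵀ * Q₁₁ s - (Q₂₂ s)ᵀ * (J₂₁ s + (J₁₂ s)ᵀ) * Q₁₁ s)
          (-((Q₂₂ s)ᵀ * J₂₂ s * Q₂₂ s + (Q₂₂ s)ᵀ * (J₂₂ s)ᵀ * Q₂₂ s)) := by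
    intro s
    rw [hEb, hQb, hJb, hKb]
    simp only [sub_eq_add_neg, Matrix.fromBlocks_transpose, Matrix.fromBlocks_multiply,
      Matrix.fromBlocks_neg, Matrix.fromBlocks_add]
    refine Matrix.fromBlocks_inj.mpr ⟨?_, ?_, ?_, ?_⟩ <;>
      simp [Matrix.mul_add, Matrix.add_mul, Matrix.transpose_add, Matrix.transpose_mul,
        Matrix.mul_assoc, sub_eq_add_neg] <;> abel
  refine ⟨?_, ?_, ?_, ?_⟩
  · have h := hsym t ht
    rw [hEb, hQb, Matrix.fromBlocks_transpose, Matrix.fromBlocks_transpose,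
      Matrix.fromBlocks_multiply, Matrix.fromBlocks_multiply] at h
    simpa using (Matrix.fromBlocks_inj.mp h).1
  · intro i j
    have h := hQE t ht (Sum.inl i) (Sum.inl j)
    simp only [hF, hG, Matrix.fromBlocks_apply₁₁] at h
    exact h
  · have hz : (Q₁₁ t)ᵀ * E₁₁ t * K₁₂ t - (Q₁₁ t)ᵀ * (J₁₂ t + (J₂₁ t)ᵀ) * Q₂₂ t = 0 := by
      ext i j
      have h := hQE t ht (Sum.inl i) (Sum.inr j)
      simp only [hF, hG, Matrix.fromBlocks_apply₁₂, Matrix.zero_apply] at h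
      have := (hasDerivAt_const t (0 : ℝ)).unique h
      simpa using this.symm
    have := sub_eq_zero.mp hz
    exact this.symm
  · have hz : -((Q₂₂ t)ᵀ * J₂₂ t * Q₂₂ t + (Q₂₂ t)ᵀ * (J₂₂ t)ᵀ * Q₂₂ t) = 0 := by
      ext i j
      have h := hQE t ht (Sum.inr i) (Sum.inr j)
      simp only [hF, hG, Matrix.fromBlocks_apply₂₂, Matrix.zero_apply] at h
      have := (hasDerivAt_const t (0 : ℝ)).unique h
      simpa using this.symm
    exact neg_eq_zero.mp hz
end

section
/- Consider the transformed gas-network descriptor system: real matrices M₁ (n₁×n₁), M₂₂ (n₂×n₂), M₂₃ (n₂×n₃), M₃₃ (n₃×n₃), G₁₂ (n₁×n₂), G₁₃ (n₁×n₃), D₂₂ (n₂×n₂), D₂₃ (n₂×n₃), D₃₃ (n₃×n₃), B₂₂ (n₂×m), B₃₂ (n₃×m), an invertible matrix Σ (n₃×n₃), a continuous input u : ℝ → ℝᵐ, and C¹ functions x₁ : ℝ → ℝ^{n₁}, x₂₂ : ℝ → ℝ^{n₂}, x₂₃ : ℝ → ℝ^{n₃}, x₃ : ℝ → ℝ^{n₃}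 satisfying on an interval I the four block equations: (1) M₁ ⬝ x₁' + G₁₂ ⬝ x₂₂ + G₁₃ ⬝ x₂₃ = 0; (2) M₂₂ ⬝ x₂₂' + M₂₃ ⬝ x₂₃' − G₁₂ᵀ ⬝ x₁ + D₂₂ ⬝ x₂₂ + D₂₃ ⬝ x₂₃ = B₂₂ ⬝ u; (3) M₂₃ᵀ ⬝ x₂₂' + M₃₃ ⬝ x₂₃' − G₁₃ᵀ ⬝ x₁ + D₂₃ᵀ ⬝ x₂₂ + D₃₃ ⬝ x₂₃ − Σ ⬝ x₃ = B₃₂ ⬝ u; (4) Σ ⬝ x₂₃ = 0. Then for all t ∈ I: x₂₃(t) = 0; the pair (x₁, x₂₂) satisfies the reduced ordinary port-Hamiltonian system M₁ ⬝ x₁' + G₁₂ ⬝ x₂₂ = 0 and M₂₂ ⬝ x₂₂' − G₁₂ᵀ ⬝ x₁ + D₂₂ ⬝ x₂₂ = B₂₂ ⬝ u; and the Lagrange multiplier is uniquely determined by x₃(t) = Σ⁻¹ ⬝ (M₂₃ᵀ ⬝ x₂₂'(t) − G₁₃ᵀ ⬝ x₁(t) + D₂₃ᵀ ⬝ x₂₂(t)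 − B₃₂ ⬝ u(t)). -/
open Matrix Set

/-- Regularization of the semidiscretized gas-network port-Hamiltonian
descriptor system: the hidden index-two constraint forces `x₂₃ = 0`, the pair
`(x₁, x₂₂)` solves the reduced implicit ordinary pH system, and the Lagrange
multiplier `x₃` is uniquely determined by the implicit index-one constraint. -/
theorem gas_network_pHDAE_regularization
    (n₁ n₂ n₃ m : ℕ) (t0 tf : ℝ) (htf : t0 < tf)
    (M₁ : Matrix (Fin n₁) (Fin n₁) ℝ)
    (M₂₂ : Matrix (Fin n₂) (Fin n₂) ℝ)
    (M₂₃ : Matrix (Fin n₂) (Fin n₃) ℝ)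
    (M₃₃ : Matrix (Fin n₃) (Fin n₃) ℝ)
    (G₁₂ : Matrix (Fin n₁) (Fin n₂) ℝ)
    (G₁₃ : Matrix (Fin n₁) (Fin n₃) ℝ)
    (D₂₂ : Matrix (Fin n₂) (Fin n₂) ℝ)
    (D₂₃ : Matrix (Fin n₂) (Fin n₃) ℝ)
    (D₃₃ : Matrix (Fin n₃) (Fin n₃) ℝ)
    (B₂₂ : Matrix (Fin n₂) (Fin m) ℝ)
    (B₃₂ : Matrix (Fin n₃) (Fin m) ℝ)
    (Sig : Matrix (Fin n₃) (Fin n₃) ℝ) (hSig : IsUnit Sig)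
    (u : ℝ → Fin m → ℝ) (huc : ContinuousOn u (Set.Icc t0 tf))
    (x₁ x₁' : ℝ → Fin n₁ → ℝ)
    (x₂₂ x₂₂' : ℝ → Fin n₂ → ℝ)
    (x₂₃ x₂₃' : ℝ → Fin n₃ → ℝ)
    (x₃ : ℝ → Fin n₃ → ℝ)
    (hx₁ : ∀ t ∈ Set.Icc t0 tf, HasDerivAt x₁ (x₁' t) t)
    (hx₁'c : ContinuousOn x₁' (Set.Icc t0 tf))
    (hx₂₂ : ∀ t ∈ Set.Icc t0 tf, HasDerivAt x₂₂ (x₂₂' t) t)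
    (hx₂₂'c : ContinuousOn x₂₂' (Set.Icc t0 tf))
    (hx₂₃ : ∀ t ∈ Set.Icc t0 tf, HasDerivAt x₂₃ (x₂₃' t) t)
    (hx₂₃'c : ContinuousOn x₂₃' (Set.Icc t0 tf))
    (heq1 : ∀ t ∈ Set.Icc t0 tf,
      M₁ *ᵥ x₁' t + G₁₂ *ᵥ x₂₂ t + G₁₃ *ᵥ x₂₃ t = 0)
    (heq2 : ∀ t ∈ Set.Icc t0 tf,
      M₂₂ *ᵥ x₂₂' t + M₂₃ *ᵥ x₂₃' t - G₁₂ᵀ *ᵥ x₁ t + D₂₂ *ᵥ x₂₂ t +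
        D₂₃ *ᵥ x₂₃ t = B₂₂ *ᵥ u t)
    (heq3 : ∀ t ∈ Set.Icc t0 tf,
      M₂₃ᵀ *ᵥ x₂₂' t + M₃₃ *ᵥ x₂₃' t - G₁₃ᵀ *ᵥ x₁ t + D₂₃ᵀ *ᵥ x₂₂ t +
        D₃₃ *ᵥ x₂₃ t - Sig *ᵥ x₃ t = B₃₂ *ᵥ u t)
    (heq4 : ∀ t ∈ Set.Icc t0 tf, Sig *ᵥ x₂₃ t = 0) :
    ∀ t ∈ Set.Icc t0 tf,
      x₂₃ t = 0 ∧
      M₁ *ᵥ x₁' t + G₁₂ *ᵥ x₂₂ t = 0 ∧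
      M₂₂ *ᵥ x₂₂' t - G₁₂ᵀ *ᵥ x₁ t + D₂₂ *ᵥ x₂₂ t = B₂₂ *ᵥ u t ∧
      x₃ t = Sig⁻¹ *ᵥ (M₂₃ᵀ *ᵥ x₂₂' t - G₁₃ᵀ *ᵥ x₁ t + D₂₃ᵀ *ᵥ x₂₂ t -
        B₃₂ *ᵥ u t) := by
  have hdet : IsUnit Sig.det := (Matrix.isUnit_iff_isUnit_det Sig).mp hSig
  have hinv : Sig⁻¹ * Sig = 1 := Matrix.nonsing_inv_mul Sig hdet
  -- x₂₃ = 0 on Icc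
  have hz : ∀ t ∈ Set.Icc t0 tf, x₂₃ t = 0 := by
    intro t ht
    have h := congrArg (fun v => Sig⁻¹ *ᵥ v) (heq4 t ht)
    simpa [Matrix.mulVec_mulVec, hinv] using h
  -- x₂₃' = 0 on Ioo
  have hz'o : ∀ t ∈ Set.Ioo t0 tf, x₂₃' t = 0 := by
    intro t ht
    have hev : x₂₃ =ᶠ[nhds t] (fun _ => (0 : Fin n₃ → ℝ)) := by
      filter_upwards [isOpen_Ioo.mem_nhds ht] with s hs
      exact hz s (Set.Ioo_subset_Icc_self hs)
    have h0 : HasDerivAt x₂₃ 0 t :=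
      (hasDerivAt_const t (0 : Fin n₃ → ℝ)).congr_of_eventuallyEq hev
    have h1 : HasDerivAt x₂₃ (x₂₃' t) t :=
      hx₂₃ t (Set.Ioo_subset_Icc_self ht)
    exact h1.unique h0
  -- x₂₃' = 0 on Icc by continuity
  have hz' : ∀ t ∈ Set.Icc t0 tf, x₂₃' t = 0 := by
    intro t ht
    have hcl : t ∈ closure (Set.Ioo t0 tf) := by
      rw [closure_Ioo htf.ne]; exact ht
    have hne : (nhdsWithin t (Set.Ioo t0 tf)).NeBot :=
      mem_closure_iff_nhdsWithin_neBot.mp hcl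
    have h1 : Filter.Tendsto x₂₃' (nhdsWithin t (Set.Ioo t0 tf)) (nhds (x₂₃' t)) :=
      ((hx₂₃'c t ht).mono Set.Ioo_subset_Icc_self)
    have h2 : Filter.Tendsto x₂₃' (nhdsWithin t (Set.Ioo t0 tf)) (nhds 0) := by
      refine Filter.Tendsto.congr' ?_ tendsto_const_nhds
      filter_upwards [self_mem_nhdsWithin] with s hs
      exact (hz'o s hs).symm
    exact tendsto_nhds_unique h1 h2
  intro t ht
  have h23 := hz t ht
  have h23' := hz' t ht
  refine ⟨h23, ?_, ?_, ?_⟩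
  · have h := heq1 t ht
    simpa [h23, Matrix.mulVec_zero] using h
  · have h := heq2 t ht
    simpa [h23, h23', Matrix.mulVec_zero] using h
  · have h := heq3 t ht
    rw [h23, h23'] at h
    simp only [Matrix.mulVec_zero, add_zero] at h
    have hS : Sig *ᵥ x₃ t =
        M₂₃ᵀ *ᵥ x₂₂' t - G₁₃ᵀ *ᵥ x₁ t + D₂₃ᵀ *ᵥ x₂₂ t - B₃₂ *ᵥ u t := by
      funext i
      have := congrFun h i
      simp only [Pi.add_apply, Pi.sub_apply] at this ⊢
      linarith
    rw [← hS, Matrix.mulVec_mulVec, hinv, Matrix.one_mulVec]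
end
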